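/- In the setting of the FPL/IFPL comparison, if the game G is non-degenerate and its deviation Dev(G) = limsup_{t→∞} s_t/v_t satisfies Dev(G) ≤ (1/2)μδ for some 0 < δ < 1, then the expected one-step gains satisfy l_t ≥ (1−δ)·r_t for all sufficiently large t. -/

import Mathlib

open MeasureTheory ProbabilityTheory Filter

/-- Cumulative gain `sⁱ_{1:t}`, including the initial gain `sⁱ_0` (taken to be `1`). -/
noncomputable def cum (s : ℕ → ℝ) (t : ℕ) : ℝ := ∑ j ∈ Finset.range (t + 1), s j

/-- `v_t = max {s¹_{1:t}, s²_{1:t}}`. -/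
noncomputable def vmax (s1 s2 : ℕ → ℝ) (t : ℕ) : ℝ := max (cum s1 t) (cum s2 t)

/-- The event that the perturbed leader, with cumulative gains evaluated at time `u` and
learning rate `ε_u = 1/(μ v_u)` (so the perturbation is `ξ/ε_u = μ v_u ξ`), selects
expert 1 at step `t`. For FPL take `u = t - 1`, for IFPL take `u = t`. -/
def pick1 {Ω : Type*} (ξ : ℕ × Bool → Ω → ℝ) (μ : ℝ) (s1 s2 : ℕ → ℝ) (t u : ℕ) : Set Ω :=
  {ω | cum s1 u + μ * vmax s1 s2 u * ξ (t, true) ω >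
       cum s2 u + μ * vmax s1 s2 u * ξ (t, false) ω}

/-- Expected one-step gain `l_t` of the FPL algorithm (learning rate `1/(μ v_{t-1})`). -/
noncomputable def fplGain {Ω : Type*} [MeasurableSpace Ω] (Pr : Measure Ω)
    (ξ : ℕ × Bool → Ω → ℝ) (μ : ℝ) (s1 s2 : ℕ → ℝ) (t : ℕ) : ℝ :=
  s1 t * (Pr (pick1 ξ μ s1 s2 t (t - 1))).toReal +
  s2 t * (Pr (pick1 ξ μ s1 s2 t (t - 1))ᶜ).toReal

/-- Expected one-step gain `r_t` of the IFPL algorithm (learning rate `1/(μ v_t)`). -/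
noncomputable def ifplGain {Ω : Type*} [MeasurableSpace Ω] (Pr : Measure Ω)
    (ξ : ℕ × Bool → Ω → ℝ) (μ : ℝ) (s1 s2 : ℕ → ℝ) (t : ℕ) : ℝ :=
  s1 t * (Pr (pick1 ξ μ s1 s2 t t)).toReal +
  s2 t * (Pr (pick1 ξ μ s1 s2 t t)ᶜ).toReal

open scoped ENNReal


noncomputable def expTail (z : ℝ) : ℝ≥0∞ := ENNReal.ofReal (Real.exp (-(max z 0)))

section Aux
variable {Ω : Type*} [MeasurableSpace Ω] (Pr : Measure Ω) [IsProbabilityMeasure Pr]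
  (ξ : ℕ × Bool → Ω → ℝ) (hmeas : ∀ p, Measurable (ξ p))
  (htail : ∀ p, ∀ y : ℝ, 0 ≤ y → Pr {ω | ξ p ω > y} = ENNReal.ofReal (Real.exp (-y)))

include htail in
lemma tail_gt (p : ℕ × Bool) (z : ℝ) : Pr {ω | ξ p ω > z} = expTail z := by
  rcases le_or_gt 0 z with hz | hz
  · rw [htail p z hz, expTail, max_eq_left hz]
  · have h0 : Pr {ω | ξ p ω > 0} = 1 := by
      rw [htail p 0 le_rfl]; simp
    have hsub : {ω | ξ p ω > 0} ⊆ {ω | ξ p ω > z} := fun ω h => lt_trans hz h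
    have h1 : (1 : ℝ≥0∞) ≤ Pr {ω | ξ p ω > z} := h0 ▸ measure_mono hsub
    have h2 : Pr {ω | ξ p ω > z} ≤ 1 := prob_le_one
    rw [le_antisymm h2 h1, expTail, max_eq_right hz.le]; simp

include htail in
lemma tail_ge (p : ℕ × Bool) (z : ℝ) : Pr {ω | ξ p ω ≥ z} = expTail z := by
  rcases le_or_gt z 0 with hz | hz
  · have h0 : Pr {ω | ξ p ω > 0} = 1 := by rw [htail p 0 le_rfl]; simp
    have hsub : {ω | ξ p ω > 0} ⊆ {ω | ξ p ω ≥ z} := fun ω h => le_trans hz h.le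
    have h1 : (1 : ℝ≥0∞) ≤ Pr {ω | ξ p ω ≥ z} := h0 ▸ measure_mono hsub
    rw [le_antisymm prob_le_one h1, expTail, max_eq_right hz]; simp
  · rw [expTail, max_eq_left hz.le]
    refine le_antisymm ?_ ?_
    · obtain ⟨N, hN⟩ := exists_nat_gt (1 / z)
      have htend : Tendsto (fun n : ℕ => ENNReal.ofReal (Real.exp (-(z - 1 / (n + 1)))))
          atTop (nhds (ENNReal.ofReal (Real.exp (-z)))) := by
        refine (ENNReal.continuous_ofReal.tendsto _).comp ?_
        refine (Real.continuous_exp.tendsto _).comp ?_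
        have : Tendsto (fun n : ℕ => (1 : ℝ) / (n + 1)) atTop (nhds 0) :=
          tendsto_one_div_add_atTop_nhds_zero_nat
        have := (tendsto_const_nhds (x := z)).sub this
        simpa using this.neg
      refine ge_of_tendsto htend ?_
      refine eventually_atTop.2 ⟨N, fun n hn => ?_⟩
      have hNpos : 0 < (N : ℝ) := lt_of_le_of_lt (by positivity) hN
      have h1n : (1 : ℝ) / (n + 1) ≤ 1 / N := by
        apply one_div_le_one_div_of_le hNpos
        have : (N:ℝ) ≤ n := Nat.cast_le.mpr hn
        linarith
      have hz1 : (1 : ℝ) / (n + 1) < z := by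
        have : (1 : ℝ) / N < z := (div_lt_iff₀ hNpos).mpr (by
          rw [div_lt_iff₀ hz] at hN; linarith)
        linarith
      have hnn : (0:ℝ) ≤ z - 1 / (n + 1) := by linarith
      rw [← htail p _ hnn]
      refine measure_mono fun ω h => ?_
      have hp : (0:ℝ) < 1/((n:ℝ)+1) := by positivity
      simp only [Set.mem_setOf_eq] at h ⊢; linarith
    · rw [← htail p z hz.le]
      refine measure_mono fun ω h => ?_
      simp only [Set.mem_setOf_eq] at h ⊢; linarith

lemma expTail_shift {z z' d : ℝ} (hd : 0 ≤ d) (h : z ≤ z' + d) :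
    ENNReal.ofReal (Real.exp (-d)) * expTail z' ≤ expTail z := by
  rw [expTail, expTail, ← ENNReal.ofReal_mul (Real.exp_nonneg _), ← Real.exp_add]
  apply ENNReal.ofReal_le_ofReal
  apply Real.exp_le_exp.mpr
  have h1 : max z 0 ≤ d + max z' 0 := by
    apply max_le
    · linarith [le_max_left z' 0]
    · linarith [le_max_right z' 0]
  linarith

include hmeas htail in
lemma prob_gt_eq (a b : ℕ × Bool) (hab : a ≠ b)
    (hindep : iIndepFun ξ Pr) (c : ℝ) :
    Pr {ω | ξ a ω > ξ b ω + c} = ∫⁻ y, expTail (y + c) ∂(Pr.map (ξ b)) := by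
  have hind : IndepFun (ξ b) (ξ a) Pr := hindep.indepFun (Ne.symm hab)
  have hmap : Pr.map (fun ω => (ξ b ω, ξ a ω)) = (Pr.map (ξ b)).prod (Pr.map (ξ a)) :=
    (indepFun_iff_map_prod_eq_prod_map_map (hmeas b).aemeasurable (hmeas a).aemeasurable).mp hind
  have hS : MeasurableSet {p : ℝ × ℝ | p.1 + c < p.2} :=
    measurableSet_lt (measurable_fst.add measurable_const) measurable_snd
  have hset : {ω | ξ a ω > ξ b ω + c} =
      (fun ω => (ξ b ω, ξ a ω)) ⁻¹' {p : ℝ × ℝ | p.1 + c < p.2} := rfl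
  rw [hset, ← Measure.map_apply ((hmeas b).prodMk (hmeas a)) hS, hmap, Measure.prod_apply hS]
  refine lintegral_congr fun y => ?_
  have h1 : (Prod.mk y ⁻¹' {p : ℝ × ℝ | p.1 + c < p.2}) = Set.Ioi (y + c) := rfl
  rw [h1, Measure.map_apply (hmeas a) measurableSet_Ioi]
  exact tail_gt Pr ξ htail a (y + c)

include hmeas htail in
lemma prob_ge_eq (a b : ℕ × Bool) (hab : a ≠ b)
    (hindep : iIndepFun ξ Pr) (c : ℝ) :
    Pr {ω | ξ a ω ≥ ξ b ω + c} = ∫⁻ y, expTail (y + c) ∂(Pr.map (ξ b)) := by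
  have hind : IndepFun (ξ b) (ξ a) Pr := hindep.indepFun (Ne.symm hab)
  have hmap : Pr.map (fun ω => (ξ b ω, ξ a ω)) = (Pr.map (ξ b)).prod (Pr.map (ξ a)) :=
    (indepFun_iff_map_prod_eq_prod_map_map (hmeas b).aemeasurable (hmeas a).aemeasurable).mp hind
  have hS : MeasurableSet {p : ℝ × ℝ | p.1 + c ≤ p.2} :=
    measurableSet_le (measurable_fst.add measurable_const) measurable_snd
  have hset : {ω | ξ a ω ≥ ξ b ω + c} =
      (fun ω => (ξ b ω, ξ a ω)) ⁻¹' {p : ℝ × ℝ | p.1 + c ≤ p.2} := rfl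
  rw [hset, ← Measure.map_apply ((hmeas b).prodMk (hmeas a)) hS, hmap, Measure.prod_apply hS]
  refine lintegral_congr fun y => ?_
  have h1 : (Prod.mk y ⁻¹' {p : ℝ × ℝ | p.1 + c ≤ p.2}) = Set.Ici (y + c) := rfl
  rw [h1, Measure.map_apply (hmeas a) measurableSet_Ici]
  exact tail_ge Pr ξ htail a (y + c)

include hmeas htail in
lemma prob_gt_compare (a b : ℕ × Bool) (hab : a ≠ b)
    (hindep : iIndepFun ξ Pr) {c c' d : ℝ}
    (hd : 0 ≤ d) (hcc : c ≤ c' + d) :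
    ENNReal.ofReal (Real.exp (-d)) * Pr {ω | ξ a ω > ξ b ω + c'} ≤
      Pr {ω | ξ a ω > ξ b ω + c} := by
  rw [prob_gt_eq Pr ξ hmeas htail a b hab hindep, prob_gt_eq Pr ξ hmeas htail a b hab hindep,
    ← lintegral_const_mul' _ _ ENNReal.ofReal_ne_top]
  exact lintegral_mono fun y => expTail_shift hd (by linarith)

include hmeas htail in
lemma prob_ge_compare (a b : ℕ × Bool) (hab : a ≠ b)
    (hindep : iIndepFun ξ Pr) {c c' d : ℝ}
    (hd : 0 ≤ d) (hcc : c ≤ c' + d) :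
    ENNReal.ofReal (Real.exp (-d)) * Pr {ω | ξ a ω ≥ ξ b ω + c'} ≤
      Pr {ω | ξ a ω ≥ ξ b ω + c} := by
  rw [prob_ge_eq Pr ξ hmeas htail a b hab hindep, prob_ge_eq Pr ξ hmeas htail a b hab hindep,
    ← lintegral_const_mul' _ _ ENNReal.ofReal_ne_top]
  exact lintegral_mono fun y => expTail_shift hd (by linarith)

end Aux

lemma ratio_step {A B s μ : ℝ} (hA : 1 ≤ A) (hB : 1 ≤ B) (hs : 0 ≤ s) (hμ : 0 < μ) :
    (B - A) / (μ * max A B) ≤ (B - A + s) / (μ * max (A + s) B) := by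
  have hV : (0:ℝ) < max A B := lt_of_lt_of_le one_pos (le_trans hA (le_max_left _ _))
  have hV' : (0:ℝ) < max (A + s) B := lt_of_lt_of_le one_pos (le_trans hB (le_max_right _ _))
  rw [div_le_div_iff₀ (by positivity) (by positivity)]
  have key : (B - A) * max (A + s) B ≤ (B - A + s) * max A B := by
    rcases le_total A B with h1 | h1 <;> rcases le_total (A + s) B with h2 | h2
    · rw [max_eq_right h1, max_eq_right h2]; nlinarith
    · rw [max_eq_right h1, max_eq_left h2]; nlinarith [sq_nonneg (B - A)]
    · rw [max_eq_left h1, max_eq_right h2]; nlinarith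
    · rw [max_eq_left h1, max_eq_left h2]; nlinarith
  nlinarith [mul_le_mul_of_nonneg_left key hμ.le]

lemma snn {s : ℕ → ℝ} (h0 : s 0 = 1) (hpos : ∀ t, 1 ≤ t → 0 ≤ s t) (j : ℕ) : 0 ≤ s j := by
  rcases Nat.eq_zero_or_pos j with rfl | hj
  · rw [h0]; norm_num
  · exact hpos j hj

lemma one_le_cum {s : ℕ → ℝ} (h0 : s 0 = 1) (hpos : ∀ t, 1 ≤ t → 0 ≤ s t) (t : ℕ) :
    1 ≤ cum s t := by
  have h := Finset.single_le_sum (f := s) (fun i _ => snn h0 hpos i)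
    (Finset.mem_range.mpr (Nat.succ_pos t))
  rw [h0] at h; exact h

lemma le_cum {s : ℕ → ℝ} (h0 : s 0 = 1) (hpos : ∀ t, 1 ≤ t → 0 ≤ s t) (t : ℕ) :
    s t ≤ cum s t :=
  Finset.single_le_sum (f := s) (fun i _ => snn h0 hpos i)
    (Finset.mem_range.mpr (Nat.lt_succ_self t))

lemma cum_succ (s : ℕ → ℝ) (n : ℕ) : cum s (n + 1) = cum s n + s (n + 1) :=
  Finset.sum_range_succ s (n + 1)

lemma pick_eq {Ω : Type*} (ξ : ℕ × Bool → Ω → ℝ) (μ : ℝ) (s1 s2 : ℕ → ℝ) (t u : ℕ)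
    (h : 0 < μ * vmax s1 s2 u) :
    pick1 ξ μ s1 s2 t u = {ω | ξ (t, true) ω > ξ (t, false) ω +
      (cum s2 u - cum s1 u) / (μ * vmax s1 s2 u)} := by
  ext ω
  simp only [pick1, Set.mem_setOf_eq, gt_iff_lt]
  have hq := div_mul_cancel₀ (cum s2 u - cum s1 u) h.ne'
  constructor <;> intro h' <;> nlinarith [h, h', hq]

lemma pickc_eq {Ω : Type*} (ξ : ℕ × Bool → Ω → ℝ) (μ : ℝ) (s1 s2 : ℕ → ℝ) (t u : ℕ)
    (h : 0 < μ * vmax s1 s2 u) :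
    (pick1 ξ μ s1 s2 t u)ᶜ = {ω | ξ (t, false) ω ≥ ξ (t, true) ω +
      (cum s1 u - cum s2 u) / (μ * vmax s1 s2 u)} := by
  ext ω
  simp only [pick1, Set.mem_compl_iff, Set.mem_setOf_eq, not_lt, ge_iff_le]
  have hq := div_mul_cancel₀ (cum s1 u - cum s2 u) h.ne'
  constructor <;> intro h' <;> nlinarith [h, h', hq]

/-- If the game is non-degenerate and its deviation `limsup s_t/v_t` is at most `μδ/2`,
then the expected one-step gains satisfy `l_t ≥ (1−δ) r_t` for all sufficiently large `t`. -/
theorem fpl_ifpl_step_comparison_small_deviation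
    {Ω : Type*} [MeasurableSpace Ω] (Pr : Measure Ω) [IsProbabilityMeasure Pr]
    (ξ : ℕ × Bool → Ω → ℝ) (hmeas : ∀ p, Measurable (ξ p))
    (hindep : iIndepFun ξ Pr)
    (htail : ∀ p, ∀ y : ℝ, 0 ≤ y → Pr {ω | ξ p ω > y} = ENNReal.ofReal (Real.exp (-y)))
    (μ : ℝ) (hμ0 : 0 < μ) (hμ1 : μ < 1)
    (s1 s2 : ℕ → ℝ) (h01 : s1 0 = 1) (h02 : s2 0 = 1)
    (hpos : ∀ t, 1 ≤ t → 0 ≤ s1 t ∧ 0 ≤ s2 t)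
    (hone : ∀ t, 1 ≤ t → s1 t = 0 ∨ s2 t = 0)
    (hnondeg : Tendsto (vmax s1 s2) atTop atTop)
    (δ : ℝ) (hδ0 : 0 < δ) (hδ1 : δ < 1)
    (hdev : Filter.limsup (fun t => max (s1 t) (s2 t) / vmax s1 s2 t) atTop ≤ μ * δ / 2) :
    ∃ t0 : ℕ, ∀ t, t0 ≤ t →
      fplGain Pr ξ μ s1 s2 t ≥ (1 - δ) * ifplGain Pr ξ μ s1 s2 t := by
  have hδ' : (0:ℝ) < 1 - δ := by linarith
  have hlog : δ < -Real.log (1 - δ) := by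
    have h := Real.log_lt_sub_one_of_pos hδ'
      (by intro hc; exact absurd (by linarith : δ = 0) hδ0.ne')
    linarith
  have hp1 : ∀ u, 1 ≤ u → 0 ≤ s1 u := fun u hu => (hpos u hu).1
  have hp2 : ∀ u, 1 ≤ u → 0 ≤ s2 u := fun u hu => (hpos u hu).2
  have hbnd : IsBoundedUnder (· ≤ ·) atTop
      (fun t => max (s1 t) (s2 t) / vmax s1 s2 t) := by
    refine isBoundedUnder_of ⟨1, fun t => ?_⟩
    have hA := one_le_cum h01 hp1 t
    have hm : max (s1 t) (s2 t) ≤ vmax s1 s2 t :=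
      max_le_max (le_cum h01 hp1 t) (le_cum h02 hp2 t)
    have hv : (1:ℝ) ≤ vmax s1 s2 t := le_trans hA (le_max_left _ _)
    rw [div_le_one (by linarith)]
    exact hm
  have hev : ∀ᶠ t in atTop,
      max (s1 t) (s2 t) / vmax s1 s2 t < μ * (-Real.log (1 - δ)) / 2 :=
    eventually_lt_of_limsup_lt
      (lt_of_le_of_lt hdev (by nlinarith [mul_lt_mul_of_pos_left hlog hμ0])) hbnd
  obtain ⟨t1, ht1⟩ := eventually_atTop.mp hev
  refine ⟨max t1 1, fun t ht => ?_⟩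
  obtain ⟨n, rfl⟩ : ∃ n, t = n + 1 :=
    ⟨t - 1, by omega⟩
  have hdevt := ht1 (n + 1) (le_trans (le_max_left _ _) ht)
  have hA : (1:ℝ) ≤ cum s1 n := one_le_cum h01 hp1 n
  have hB : (1:ℝ) ≤ cum s2 n := one_le_cum h02 hp2 n
  have e1 : cum s1 (n + 1) = cum s1 n + s1 (n + 1) := cum_succ s1 n
  have e2 : cum s2 (n + 1) = cum s2 n + s2 (n + 1) := cum_succ s2 n
  have hμvp : 0 < μ * vmax s1 s2 n :=
    mul_pos hμ0 (lt_of_lt_of_le one_pos (le_trans hA (le_max_left _ _)))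
  have hμvc : 0 < μ * vmax s1 s2 (n + 1) :=
    mul_pos hμ0 (lt_of_lt_of_le one_pos
      (le_trans (one_le_cum h01 hp1 (n + 1)) (le_max_left _ _)))
  have hvp : vmax s1 s2 n = max (cum s1 n) (cum s2 n) := rfl
  have hab : ((n+1 : ℕ), true) ≠ ((n+1 : ℕ), false) := by simp
  have hLexp : Real.exp (-(-Real.log (1 - δ))) = 1 - δ := by
    rw [neg_neg, Real.exp_log hδ']
  rcases hone (n + 1) (by omega) with h1 | h2
  · -- s1 (n+1) = 0 : compare the complement (pick-expert-2) probabilities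
    have hs : 0 ≤ s2 (n + 1) := hp2 (n + 1) (by omega)
    have hvc : vmax s1 s2 (n + 1) = max (cum s1 n) (cum s2 n + s2 (n + 1)) := by
      show max (cum s1 (n+1)) (cum s2 (n+1)) = _
      rw [e1, e2, h1, add_zero]
    have hVc : (0:ℝ) < max (cum s1 n) (cum s2 n + s2 (n + 1)) :=
      lt_of_lt_of_le one_pos (le_trans hA (le_max_left _ _))
    set d := 2 * s2 (n + 1) / (μ * max (cum s1 n) (cum s2 n + s2 (n + 1))) with hd
    have hd0 : 0 ≤ d := by positivity
    have hset1 : (pick1 ξ μ s1 s2 (n+1) n)ᶜ = {ω | ξ (n+1, false) ω ≥ ξ (n+1, true) ω +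
        (cum s1 n - cum s2 n) / (μ * vmax s1 s2 n)} := pickc_eq ξ μ s1 s2 (n+1) n hμvp
    have hset2 : (pick1 ξ μ s1 s2 (n+1) (n+1))ᶜ = {ω | ξ (n+1, false) ω ≥ ξ (n+1, true) ω +
        (cum s1 n - (cum s2 n + s2 (n+1))) /
          (μ * max (cum s1 n) (cum s2 n + s2 (n + 1)))} := by
      rw [pickc_eq ξ μ s1 s2 (n+1) (n+1) hμvc, e1, e2, h1, add_zero, hvc]
    have hcc : (cum s1 n - cum s2 n) / (μ * vmax s1 s2 n) ≤
        (cum s1 n - (cum s2 n + s2 (n+1))) /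
          (μ * max (cum s1 n) (cum s2 n + s2 (n + 1))) + d := by
      have h0 := ratio_step hB hA hs hμ0
      rw [max_comm (cum s2 n) (cum s1 n), max_comm (cum s2 n + s2 (n+1)) (cum s1 n)] at h0
      have heq : (cum s1 n - (cum s2 n + s2 (n+1))) /
            (μ * max (cum s1 n) (cum s2 n + s2 (n + 1))) + d
          = (cum s1 n - cum s2 n + s2 (n+1)) /
            (μ * max (cum s1 n) (cum s2 n + s2 (n + 1))) := by
        rw [hd, ← add_div]; congr 1; ring
      rw [heq, hvp]
      exact h0
    have hkey := prob_ge_compare Pr ξ hmeas htail (n+1, false) (n+1, true)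
      (Ne.symm hab) hindep hd0 hcc
    rw [← hset1, ← hset2] at hkey
    have hsv : s2 (n + 1) / max (cum s1 n) (cum s2 n + s2 (n + 1))
        < μ * (-Real.log (1 - δ)) / 2 := by
      rw [← hvc]
      rwa [h1, max_eq_right hs] at hdevt
    have hdL : d < -Real.log (1 - δ) := by
      have h2μ : 0 < (2:ℝ) / μ := by positivity
      calc d = (2/μ) * (s2 (n+1) / max (cum s1 n) (cum s2 n + s2 (n + 1))) := by
              rw [hd]; ring
        _ < (2/μ) * (μ * (-Real.log (1 - δ)) / 2) := by
              exact mul_lt_mul_of_pos_left hsv h2μ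
        _ = -Real.log (1 - δ) := by field_simp
    have hexp : 1 - δ ≤ Real.exp (-d) := by
      rw [← hLexp]; exact Real.exp_le_exp.mpr (by linarith)
    have hto := ENNReal.toReal_mono (measure_ne_top Pr _) hkey
    rw [ENNReal.toReal_mul, ENNReal.toReal_ofReal (Real.exp_nonneg _)] at hto
    have hq0 : (0:ℝ) ≤ (Pr (pick1 ξ μ s1 s2 (n+1) (n+1))ᶜ).toReal := ENNReal.toReal_nonneg
    have hpq : (1 - δ) * (Pr (pick1 ξ μ s1 s2 (n+1) (n+1))ᶜ).toReal ≤
        (Pr (pick1 ξ μ s1 s2 (n+1) n)ᶜ).toReal :=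
      le_trans (mul_le_mul_of_nonneg_right hexp hq0) hto
    simp only [fplGain, ifplGain, Nat.add_sub_cancel, h1]
    nlinarith [mul_le_mul_of_nonneg_left hpq hs, hq0]
  · -- s2 (n+1) = 0 : compare the pick-expert-1 probabilities
    have hs : 0 ≤ s1 (n + 1) := hp1 (n + 1) (by omega)
    have hvc : vmax s1 s2 (n + 1) = max (cum s1 n + s1 (n + 1)) (cum s2 n) := by
      show max (cum s1 (n+1)) (cum s2 (n+1)) = _
      rw [e1, e2, h2, add_zero]
    have hVc : (0:ℝ) < max (cum s1 n + s1 (n + 1)) (cum s2 n) :=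
      lt_of_lt_of_le one_pos (le_trans hB (le_max_right _ _))
    set d := 2 * s1 (n + 1) / (μ * max (cum s1 n + s1 (n + 1)) (cum s2 n)) with hd
    have hd0 : 0 ≤ d := by positivity
    have hset1 : pick1 ξ μ s1 s2 (n+1) n = {ω | ξ (n+1, true) ω > ξ (n+1, false) ω +
        (cum s2 n - cum s1 n) / (μ * vmax s1 s2 n)} := pick_eq ξ μ s1 s2 (n+1) n hμvp
    have hset2 : pick1 ξ μ s1 s2 (n+1) (n+1) = {ω | ξ (n+1, true) ω > ξ (n+1, false) ω +
        (cum s2 n - (cum s1 n + s1 (n+1))) /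
          (μ * max (cum s1 n + s1 (n + 1)) (cum s2 n))} := by
      rw [pick_eq ξ μ s1 s2 (n+1) (n+1) hμvc, e1, e2, h2, add_zero, hvc]
    have hcc : (cum s2 n - cum s1 n) / (μ * vmax s1 s2 n) ≤
        (cum s2 n - (cum s1 n + s1 (n+1))) /
          (μ * max (cum s1 n + s1 (n + 1)) (cum s2 n)) + d := by
      have h0 := ratio_step hA hB hs hμ0
      have heq : (cum s2 n - (cum s1 n + s1 (n+1))) /
            (μ * max (cum s1 n + s1 (n + 1)) (cum s2 n)) + d
          = (cum s2 n - cum s1 n + s1 (n+1)) /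
            (μ * max (cum s1 n + s1 (n + 1)) (cum s2 n)) := by
        rw [hd, ← add_div]; congr 1; ring
      rw [heq, hvp]
      exact h0
    have hkey := prob_gt_compare Pr ξ hmeas htail (n+1, true) (n+1, false)
      hab hindep hd0 hcc
    rw [← hset1, ← hset2] at hkey
    have hsv : s1 (n + 1) / max (cum s1 n + s1 (n + 1)) (cum s2 n)
        < μ * (-Real.log (1 - δ)) / 2 := by
      rw [← hvc]
      rwa [h2, max_eq_left hs] at hdevt
    have hdL : d < -Real.log (1 - δ) := by
      have h2μ : 0 < (2:ℝ) / μ := by positivity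
      calc d = (2/μ) * (s1 (n+1) / max (cum s1 n + s1 (n + 1)) (cum s2 n)) := by
              rw [hd]; ring
        _ < (2/μ) * (μ * (-Real.log (1 - δ)) / 2) := by
              exact mul_lt_mul_of_pos_left hsv h2μ
        _ = -Real.log (1 - δ) := by field_simp
    have hexp : 1 - δ ≤ Real.exp (-d) := by
      rw [← hLexp]; exact Real.exp_le_exp.mpr (by linarith)
    have hto := ENNReal.toReal_mono (measure_ne_top Pr _) hkey
    rw [ENNReal.toReal_mul, ENNReal.toReal_ofReal (Real.exp_nonneg _)] at hto
    have hq0 : (0:ℝ) ≤ (Pr (pick1 ξ μ s1 s2 (n+1) (n+1))).toReal := ENNReal.toReal_nonneg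
    have hpq : (1 - δ) * (Pr (pick1 ξ μ s1 s2 (n+1) (n+1))).toReal ≤
        (Pr (pick1 ξ μ s1 s2 (n+1) n)).toReal :=
      le_trans (mul_le_mul_of_nonneg_right hexp hq0) hto
    simp only [fplGain, ifplGain, Nat.add_sub_cancel, h2]
    nlinarith [mul_le_mul_of_nonneg_left hpq hs, hq0]
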